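/- (Lemma 1 of Appendix B, asymptotic form) Fix real numbers a11, a12, a21, a22, σx, σy with a22 ≠ 0 and ã ≠ 0. Let ε₀ > 0 and let c11, c12, c22 : (0, ε₀) → ℝ be such that for each ε ∈ (0, ε₀), (c11(ε), c12(ε), c22(ε)) solves the two-scale Lyapunov system, with c11 and c12 bounded on (0, ε₀). Then c11(ε) = −(σx²*(1 − 2ε*â) + ε*σy²*a12²/a22²)/(2*ã*(1 − ε*â)) + O(ε²) as ε → 0⁺. -/

import Mathlib

/-- `f = O(ε²)` as `ε → 0⁺`, with the bound holding inside `(0, ε₀)`. -/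
def IsO2 (ε₀ : ℝ) (f : ℝ → ℝ) : Prop :=
  ∃ C ε₁ : ℝ, 0 < C ∧ 0 < ε₁ ∧ ε₁ ≤ ε₀ ∧ ∀ ε, 0 < ε → ε < ε₁ → |f ε| ≤ C * ε ^ 2

/-- The two-scale Lyapunov system. -/
def SolvesLyapunov (a11 a12 a21 a22 σx σy ε c11 c12 c22 : ℝ) : Prop :=
  0 = σx ^ 2 + 2 * a11 * c11 + 2 * a12 * c12 ∧
  0 = a11 * c12 + a12 * c22 + c11 * a21 / ε + c12 * a22 / ε ∧
  0 = σy ^ 2 / ε + 2 * c12 * a21 / ε + 2 * c22 * a22 / ε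

set_option maxHeartbeats 1000000 in
/-- Auxiliary algebraic identity used in the proof of `stmt5`. -/
lemma key_aux (a11 a12 a21 a22 σx σy ε : ℝ) (ha22 : a22 ≠ 0)
    (h1h : 1 - ε * (a12 * a21 / a22 ^ 2) ≠ 0) (h1r : 1 + ε * (a11 / a22) ≠ 0)
    (hQ : a22 + ε * a11 ≠ 0) (hTne : a11 * a22 - a12 * a21 ≠ 0) :
    -((a22 ^ 2 + ε * (a11 * a22 - a12 * a21)) * σx ^ 2 + ε * a12 ^ 2 * σy ^ 2)
        / (2 * (a11 * a22 - a12 * a21) * (a22 + ε * a11))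
      + (σx ^ 2 * (1 - 2 * ε * (a12 * a21 / a22 ^ 2)) + ε * σy ^ 2 * a12 ^ 2 / a22 ^ 2)
        / (2 * (a11 - a12 * a21 / a22) * (1 - ε * (a12 * a21 / a22 ^ 2)))
    = ε ^ 2 * (a22 * (σx ^ 2 * (a12 * a21 / a22 ^ 2) *
          ((a11 * a22 - a12 * a21) / a22 ^ 2 - 2 * (a11 / a22)) +
          (σy ^ 2 * a12 ^ 2 / a22 ^ 2) * (a11 / a22 + a12 * a21 / a22 ^ 2)))
        / (2 * (a11 * a22 - a12 * a21) *
          ((1 - ε * (a12 * a21 / a22 ^ 2)) * (1 + ε * (a11 / a22)))) := by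
  have hA : a22 ^ 2 - ε * (a12 * a21) ≠ 0 := by
    have h : a22 ^ 2 - ε * (a12 * a21) = a22 ^ 2 * (1 - ε * (a12 * a21 / a22 ^ 2)) := by
      field_simp
    rw [h]; exact mul_ne_zero (pow_ne_zero _ ha22) h1h
  have hA' : a22 ^ 2 - ε * a12 * a21 ≠ 0 := by rw [mul_assoc]; exact hA
  have hT' : a22 * a11 - a12 * a21 ≠ 0 := by rw [mul_comm]; exact hTne
  field_simp [hA, hA', hT']
  ring

set_option maxHeartbeats 1600000 in
/-- Lemma 1 of Appendix B, asymptotic form: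
`c11(ε) = −(σx²(1 − 2εâ) + ε σy² a12²/a22²)/(2 ã (1 − εâ)) + O(ε²)` as `ε → 0⁺`. -/
theorem stmt5 (a11 a12 a21 a22 σx σy : ℝ) (ha22 : a22 ≠ 0)
    (hat : a11 - a12 * a21 / a22 ≠ 0)
    (ε₀ : ℝ) (hε₀ : 0 < ε₀) (c11 c12 c22 : ℝ → ℝ)
    (hsol : ∀ ε, 0 < ε → ε < ε₀ →
      SolvesLyapunov a11 a12 a21 a22 σx σy ε (c11 ε) (c12 ε) (c22 ε))
    (hbdd : ∃ M : ℝ, ∀ ε, 0 < ε → ε < ε₀ → |c11 ε| ≤ M ∧ |c12 ε| ≤ M) :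
    IsO2 ε₀ (fun ε =>
      c11 ε +
        (σx ^ 2 * (1 - 2 * ε * (a12 * a21 / a22 ^ 2)) + ε * σy ^ 2 * a12 ^ 2 / a22 ^ 2)
          / (2 * (a11 - a12 * a21 / a22) * (1 - ε * (a12 * a21 / a22 ^ 2)))) := by
  obtain ⟨T, hT⟩ : ∃ x : ℝ, x = a11 * a22 - a12 * a21 := ⟨_, rfl⟩
  obtain ⟨K, hK⟩ : ∃ x : ℝ, x = a22 * (σx ^ 2 * (a12 * a21 / a22 ^ 2) *
      ((a11 * a22 - a12 * a21) / a22 ^ 2 - 2 * (a11 / a22)) +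
      (σy ^ 2 * a12 ^ 2 / a22 ^ 2) * (a11 / a22 + a12 * a21 / a22 ^ 2)) := ⟨_, rfl⟩
  obtain ⟨B, hB⟩ : ∃ x : ℝ, x = |a12 * a21 / a22 ^ 2| + |a11 / a22| := ⟨_, rfl⟩
  have hBnn : 0 ≤ B := by rw [hB]; positivity
  have hTne : T ≠ 0 := by
    have h : T = a22 * (a11 - a12 * a21 / a22) := by rw [hT]; field_simp
    rw [h]; exact mul_ne_zero ha22 hat
  have hTpos : 0 < |T| := abs_pos.mpr hTne
  refine ⟨2 * |K| / |T| + 1, min ε₀ (1 / (2 * B + 1)), by positivity,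
    lt_min hε₀ (by positivity), min_le_left _ _, ?_⟩
  intro ε hε hε1
  have hεε₀ : ε < ε₀ := lt_of_lt_of_le hε1 (min_le_left _ _)
  have hεB : ε < 1 / (2 * B + 1) := lt_of_lt_of_le hε1 (min_le_right _ _)
  have hεne : ε ≠ 0 := ne_of_gt hε
  obtain ⟨h1, h2, h3⟩ := hsol ε hε hεε₀
  -- polynomial forms of the equations
  have e2 : 0 = ε * (a11 * c12 ε + a12 * c22 ε) + c11 ε * a21 + c12 ε * a22 := by
    field_simp at h2; linarith
  have e3 : 0 = σy ^ 2 + 2 * c12 ε * a21 + 2 * c22 ε * a22 := by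
    field_simp at h3; linarith
  -- smallness bounds
  have hεB2 : ε * (2 * B + 1) < 1 := (lt_div_iff₀ (by positivity)).mp hεB
  have hεsum : ε * B < 1 / 2 := by nlinarith
  have hεh : ε * |a12 * a21 / a22 ^ 2| < 1 / 2 := by
    have h : ε * |a12 * a21 / a22 ^ 2| ≤ ε * B := by
      apply mul_le_mul_of_nonneg_left _ hε.le
      rw [hB]; linarith [abs_nonneg (a11 / a22)]
    linarith
  have hεr : ε * |a11 / a22| < 1 / 2 := by
    have h : ε * |a11 / a22| ≤ ε * B := by
      apply mul_le_mul_of_nonneg_left _ hε.le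
      rw [hB]; linarith [abs_nonneg (a12 * a21 / a22 ^ 2)]
    linarith
  have hbh : (1:ℝ) / 2 ≤ |1 - ε * (a12 * a21 / a22 ^ 2)| := by
    have h2' : |ε * (a12 * a21 / a22 ^ 2)| = ε * |a12 * a21 / a22 ^ 2| := by
      rw [abs_mul, abs_of_pos hε]
    calc (1:ℝ)/2 ≤ |(1:ℝ)| - |ε * (a12 * a21 / a22 ^ 2)| := by rw [abs_one, h2']; linarith
    _ ≤ |1 - ε * (a12 * a21 / a22 ^ 2)| := abs_sub_abs_le_abs_sub _ _
  have hbr : (1:ℝ) / 2 ≤ |1 + ε * (a11 / a22)| := by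
    have h2' : |ε * (a11 / a22)| = ε * |a11 / a22| := by rw [abs_mul, abs_of_pos hε]
    calc (1:ℝ)/2 ≤ |(1:ℝ)| - |(-(ε * (a11 / a22)))| := by rw [abs_one, abs_neg, h2']; linarith
    _ ≤ |1 - -(ε * (a11 / a22))| := abs_sub_abs_le_abs_sub _ _
    _ = |1 + ε * (a11 / a22)| := by ring_nf
  have h1h : (1 : ℝ) - ε * (a12 * a21 / a22 ^ 2) ≠ 0 := by
    intro hc; rw [hc, abs_zero] at hbh; linarith
  have h1r : (1 : ℝ) + ε * (a11 / a22) ≠ 0 := by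
    intro hc; rw [hc, abs_zero] at hbr; linarith
  have hQ : a22 + ε * a11 ≠ 0 := by
    have h : a22 + ε * a11 = a22 * (1 + ε * (a11 / a22)) := by field_simp
    rw [h]; exact mul_ne_zero ha22 h1r
  have hTne' : a11 * a22 - a12 * a21 ≠ 0 := hT ▸ hTne
  -- exact value of c11
  have hc11 : c11 ε * (2 * (a11 * a22 - a12 * a21) * (a22 + ε * a11)) =
      -((a22 ^ 2 + ε * (a11 * a22 - a12 * a21)) * σx ^ 2 + ε * a12 ^ 2 * σy ^ 2) := by
    linear_combination (-(a22 ^ 2 + ε * (a11 * a22 - a12 * a21))) * h1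
      + (2 * a12 * a22) * e2 + (-(ε * a12 ^ 2)) * e3
  have hc11' : c11 ε = -((a22 ^ 2 + ε * (a11 * a22 - a12 * a21)) * σx ^ 2
        + ε * a12 ^ 2 * σy ^ 2)
      / (2 * (a11 * a22 - a12 * a21) * (a22 + ε * a11)) := by
    rw [eq_div_iff (mul_ne_zero (mul_ne_zero two_ne_zero hTne') hQ)]
    exact hc11
  show |c11 ε + (σx ^ 2 * (1 - 2 * ε * (a12 * a21 / a22 ^ 2)) + ε * σy ^ 2 * a12 ^ 2 / a22 ^ 2)
          / (2 * (a11 - a12 * a21 / a22) * (1 - ε * (a12 * a21 / a22 ^ 2)))| ≤ _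
  rw [hc11', key_aux a11 a12 a21 a22 σx σy ε ha22 h1h h1r hQ hTne', ← hK, ← hT, abs_div]
  have hdenlb : |T| / 2 ≤ |2 * T * ((1 - ε * (a12 * a21 / a22 ^ 2)) * (1 + ε * (a11 / a22)))| := by
    rw [abs_mul, abs_mul, abs_mul]
    calc |T| / 2 = 2 * |T| * ((1/2) * (1/2)) := by ring
    _ ≤ |2| * |T| * (|1 - ε * (a12 * a21 / a22 ^ 2)| * |1 + ε * (a11 / a22)|) := by
        rw [abs_two]; gcongr
  have hdenpos : (0:ℝ) < |T| / 2 := by linarith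
  calc |ε ^ 2 * K| / |2 * T * ((1 - ε * (a12 * a21 / a22 ^ 2)) * (1 + ε * (a11 / a22)))|
      ≤ |ε ^ 2 * K| / (|T| / 2) := by gcongr
    _ = (2 * |K| / |T|) * ε ^ 2 := by
        rw [abs_mul, abs_pow, abs_of_pos hε]; field_simp
    _ ≤ (2 * |K| / |T| + 1) * ε ^ 2 := by nlinarith [sq_nonneg ε]
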